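/- Let $W_H$ be the Weyl group of type $B_m$ realized as the group of signed permutations of $\{1,\dots,m\}$ (i.e., the hyperoctahedral group $C_2 \wr S_m$), and let $W_L \cong S_m$ be its subgroup of unsigned permutations. Then the character of $W_H$ induced from the sign character of $W_L$ is multiplicity free. -/

import Mathlib

open scoped Classical
open CategoryTheory

noncomputable section

/-- The fixed-point-free involution `(x, s) ↦ (x, s + 1)` on `Fin m × ZMod 2`.
The hyperoctahedral group `C₂ ≀ Sₘ` is its centralizer in `Perm (Fin m × ZMod 2)`. -/
def flipPerm (m : ℕ) : Equiv.Perm (Fin m × ZMod 2) :=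
  Equiv.prodCongr (Equiv.refl (Fin m)) (Equiv.addLeft (1 : ZMod 2))

/-- The embedding of `Sₘ` as the subgroup of unsigned permutations. -/
def permEmb (m : ℕ) : Equiv.Perm (Fin m) →* Equiv.Perm (Fin m × ZMod 2) where
  toFun σ := Equiv.prodCongr σ (Equiv.refl (ZMod 2))
  map_one' := Equiv.ext fun x => rfl
  map_mul' σ τ := Equiv.ext fun x => rfl

/-- The hyperoctahedral group `W_H = C₂ ≀ Sₘ` realized as signed permutations. -/
abbrev WH (m : ℕ) : Subgroup (Equiv.Perm (Fin m × ZMod 2)) :=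
  Subgroup.centralizer {flipPerm m}

/-- Extension by zero of the sign character of `W_L ≅ Sₘ` to the ambient group. -/
def sgnExt (m : ℕ) (g : Equiv.Perm (Fin m × ZMod 2)) : ℂ :=
  ∑ σ : Equiv.Perm (Fin m), if permEmb m σ = g then ((Equiv.Perm.sign σ : ℤ) : ℂ) else 0

/-- The class function of `W_H` induced from the sign character of `W_L ≅ Sₘ`. -/
def indSgn (m : ℕ) (h : WH m) : ℂ :=
  (Nat.card (Equiv.Perm (Fin m)) : ℂ)⁻¹ *
    ∑ x : WH m,
      sgnExt m ((x : Equiv.Perm (Fin m × ZMod 2))⁻¹ *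
        (h : Equiv.Perm (Fin m × ZMod 2)) * (x : Equiv.Perm (Fin m × ZMod 2)))

namespace HyperAux

variable {m : ℕ}

lemma permEmb_apply (σ : Equiv.Perm (Fin m)) (x : Fin m × ZMod 2) :
    permEmb m σ x = (σ x.1, x.2) := rfl

lemma permEmb_mem (σ : Equiv.Perm (Fin m)) : permEmb m σ ∈ WH m := by
  rw [Subgroup.mem_centralizer_iff]
  rintro h rfl
  exact Equiv.ext fun x => rfl

/-- `Sₘ → WH m` as a monoid hom. -/
def iota (m : ℕ) : Equiv.Perm (Fin m) →* WH m :=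
  (permEmb m).codRestrict (WH m) permEmb_mem

@[simp] lemma iota_coe (σ : Equiv.Perm (Fin m)) :
    ((iota m σ : WH m) : Equiv.Perm (Fin m × ZMod 2)) = permEmb m σ := rfl

lemma iota_injective : Function.Injective (iota m) := by
  intro σ τ h
  refine Equiv.ext fun i => ?_
  have := congrArg (fun (g : WH m) => ((g : Equiv.Perm (Fin m × ZMod 2)) (i, 0)).1) h
  simpa [permEmb_apply] using this

lemma zmod2_add_self : ∀ s : ZMod 2, s + s = 0 := by decide

lemma WH_flip (g : Equiv.Perm (Fin m × ZMod 2)) (hg : g ∈ WH m)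
    (x : Fin m × ZMod 2) : g (x.1, x.2 + 1) = ((g x).1, (g x).2 + 1) := by
  have h := Subgroup.mem_centralizer_iff.mp hg (flipPerm m) rfl
  have h2 := congrFun (congrArg (fun (e : Equiv.Perm (Fin m × ZMod 2)) =>
    (e : Fin m × ZMod 2 → Fin m × ZMod 2)) h) x
  simp only [Equiv.Perm.coe_mul, Function.comp_apply] at h2
  have hx : flipPerm m x = (x.1, x.2 + 1) := by
    show (x.1, 1 + x.2) = (x.1, x.2 + 1); rw [add_comm]
  have hgx : flipPerm m (g x) = ((g x).1, (g x).2 + 1) := by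
    show ((g x).1, 1 + (g x).2) = ((g x).1, (g x).2 + 1); rw [add_comm]
  rw [hx] at h2; rw [← h2, hgx]

lemma WH_apply (g : Equiv.Perm (Fin m × ZMod 2)) (hg : g ∈ WH m)
    (i : Fin m) (s : ZMod 2) : g (i, s) = ((g (i, 0)).1, (g (i, 0)).2 + s) := by
  rcases (by decide : ∀ s : ZMod 2, s = 0 ∨ s = 1) s with rfl | rfl
  · simp
  · simpa using WH_flip g hg (i, 0)

lemma fst_const (g : Equiv.Perm (Fin m × ZMod 2)) (hg : g ∈ WH m)
    (i : Fin m) (t : ZMod 2) : (g (i, t)).1 = (g (i, 0)).1 := by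
  rw [WH_apply g hg]

lemma aux_inv (g : Equiv.Perm (Fin m × ZMod 2)) (hg : g ∈ WH m) (j : Fin m) :
    (g ((g⁻¹ (j, 0)).1, 0)).1 = j := by
  have h1 := fst_const g hg (g⁻¹ (j, 0)).1 (g⁻¹ (j, 0)).2
  rw [← h1]
  rw [show ((g⁻¹ (j, 0)).1, (g⁻¹ (j, 0)).2) = g⁻¹ (j, 0) from rfl]
  rw [← Equiv.Perm.mul_apply, mul_inv_cancel, Equiv.Perm.one_apply]

lemma exists_conj_inv (g : Equiv.Perm (Fin m × ZMod 2)) (hg : g ∈ WH m) :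
    ∃ σ : Equiv.Perm (Fin m), permEmb m σ * g * permEmb m σ = g⁻¹ := by
  have hg' : g⁻¹ ∈ WH m := inv_mem hg
  refine ⟨⟨fun j => (g⁻¹ (j, 0)).1, fun i => (g (i, 0)).1,
    fun j => aux_inv g hg j, fun j => by simpa using aux_inv g⁻¹ hg' j⟩, ?_⟩
  set σ : Equiv.Perm (Fin m) := ⟨fun j => (g⁻¹ (j, 0)).1, fun i => (g (i, 0)).1,
      fun j => aux_inv g hg j, fun j => by simpa using aux_inv g⁻¹ hg' j⟩ with hσdef
  refine eq_inv_of_mul_eq_one_left ?_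
  refine Equiv.ext fun x => ?_
  show permEmb m σ (g (permEmb m σ (g x))) = x
  have hσ1 : σ (g (x.1, 0)).1 = x.1 := by
    show (g⁻¹ ((g (x.1, 0)).1, 0)).1 = x.1
    simpa using aux_inv g⁻¹ hg' x.1
  have hq : g x = ((g (x.1, 0)).1, (g (x.1, 0)).2 + x.2) := WH_apply g hg x.1 x.2
  rw [hq, permEmb_apply]
  show permEmb m σ (g (σ (g (x.1, 0)).1, (g (x.1, 0)).2 + x.2)) = x
  rw [hσ1, WH_apply g hg x.1, ← add_assoc, zmod2_add_self, zero_add, permEmb_apply]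
  show (σ (g (x.1, 0)).1, x.2) = x
  rw [hσ1]

/-! ### The group algebra, the antipode, and the sign idempotent -/

/-- The linear anti-automorphism of the group algebra induced by inversion. -/
def tau {G : Type*} [Group G] : MonoidAlgebra ℂ G ≃ₗ[ℂ] MonoidAlgebra ℂ G :=
  MonoidAlgebra.mapDomainLinearEquiv ℂ ℂ (Equiv.inv G)

@[simp] lemma tau_single {G : Type*} [Group G] (g : G) (r : ℂ) :
    tau (MonoidAlgebra.single g r) = MonoidAlgebra.single g⁻¹ r :=
  MonoidAlgebra.mapDomainLinearEquiv_single (R := ℂ) (Equiv.inv G) r g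

lemma tau_mul {G : Type*} [Group G] (x y : MonoidAlgebra ℂ G) :
    tau (x * y) = tau y * tau x := by
  induction x using MonoidAlgebra.induction_linear with
  | zero => simp
  | add f g hf hg => simp only [add_mul, mul_add, map_add, hf, hg]
  | single g r =>
    induction y using MonoidAlgebra.induction_linear with
    | zero => simp
    | add f g hf hg => simp only [add_mul, mul_add, map_add, hf, hg]
    | single h s =>
      rw [MonoidAlgebra.single_mul_single, tau_single, tau_single, tau_single,
        MonoidAlgebra.single_mul_single, mul_inv_rev, mul_comm s r]

/-- The sign of a permutation, as a complex number. -/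
def sgnC (σ : Equiv.Perm (Fin m)) : ℂ := ((Equiv.Perm.sign σ : ℤ) : ℂ)

lemma sgnC_mul (σ τ : Equiv.Perm (Fin m)) : sgnC (σ * τ) = sgnC σ * sgnC τ := by
  simp [sgnC]

lemma sgnC_inv (σ : Equiv.Perm (Fin m)) : sgnC σ⁻¹ = sgnC σ := by
  simp [sgnC]

lemma sgnC_mul_self (σ : Equiv.Perm (Fin m)) : sgnC σ * sgnC σ = 1 := by
  rcases Int.units_eq_one_or (Equiv.Perm.sign σ) with h | h <;> simp [sgnC, h]

lemma star_sgnC (σ : Equiv.Perm (Fin m)) : star (sgnC σ) = sgnC σ := by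
  simp [sgnC]

lemma cardL_ne_zero : ((Nat.card (Equiv.Perm (Fin m)) : ℂ)) ≠ 0 :=
  Nat.cast_ne_zero.mpr Nat.card_pos.ne'

/-- The `sgn`-averaging idempotent in the group algebra of `WH m`. -/
def eAvg (m : ℕ) : MonoidAlgebra ℂ (WH m) :=
  (Nat.card (Equiv.Perm (Fin m)) : ℂ)⁻¹ •
    ∑ σ : Equiv.Perm (Fin m), MonoidAlgebra.single (iota m σ) (sgnC σ)

lemma e_mul_single (τ : Equiv.Perm (Fin m)) :
    eAvg m * MonoidAlgebra.single (iota m τ) 1 = sgnC τ • eAvg m := by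
  rw [eAvg, smul_mul_assoc, Finset.sum_mul, smul_comm]
  congr 1
  rw [Finset.smul_sum]
  refine Fintype.sum_equiv (Equiv.mulRight τ)
    (fun σ => MonoidAlgebra.single (iota m σ) (sgnC σ) * MonoidAlgebra.single (iota m τ) 1)
    (fun σ => sgnC τ • MonoidAlgebra.single (iota m σ) (sgnC σ)) (fun σ => ?_)
  show MonoidAlgebra.single (iota m σ) (sgnC σ) * MonoidAlgebra.single (iota m τ) 1
    = sgnC τ • MonoidAlgebra.single (iota m (σ * τ)) (sgnC (σ * τ))
  rw [MonoidAlgebra.single_mul_single, mul_one, ← map_mul, MonoidAlgebra.smul_single']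
  rw [sgnC_mul, mul_comm (sgnC σ), ← mul_assoc, sgnC_mul_self, one_mul]

lemma single_mul_e (τ : Equiv.Perm (Fin m)) :
    MonoidAlgebra.single (iota m τ) 1 * eAvg m = sgnC τ • eAvg m := by
  rw [eAvg, mul_smul_comm, Finset.mul_sum, smul_comm]
  congr 1
  rw [Finset.smul_sum]
  refine Fintype.sum_equiv (Equiv.mulLeft τ)
    (fun σ => MonoidAlgebra.single (iota m τ) 1 * MonoidAlgebra.single (iota m σ) (sgnC σ))
    (fun σ => sgnC τ • MonoidAlgebra.single (iota m σ) (sgnC σ)) (fun σ => ?_)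
  show MonoidAlgebra.single (iota m τ) 1 * MonoidAlgebra.single (iota m σ) (sgnC σ)
    = sgnC τ • MonoidAlgebra.single (iota m (τ * σ)) (sgnC (τ * σ))
  rw [MonoidAlgebra.single_mul_single, one_mul, ← map_mul, MonoidAlgebra.smul_single']
  rw [sgnC_mul, ← mul_assoc, sgnC_mul_self, one_mul]

lemma e_mul_e : eAvg m * eAvg m = eAvg m := by
  nth_rewrite 2 [eAvg]
  rw [mul_smul_comm, Finset.mul_sum]
  have h : ∀ σ : Equiv.Perm (Fin m),
      eAvg m * MonoidAlgebra.single (iota m σ) (sgnC σ) = eAvg m := by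
    intro σ
    have : MonoidAlgebra.single (iota m σ) (sgnC σ)
        = sgnC σ • MonoidAlgebra.single (iota m σ) 1 := by
      rw [MonoidAlgebra.smul_single', mul_one]
    rw [this, mul_smul_comm, e_mul_single, smul_smul, sgnC_mul_self, one_smul]
  rw [Finset.sum_congr rfl (fun σ _ => h σ), Finset.sum_const, Finset.card_univ,
    ← Nat.card_eq_fintype_card, ← Nat.cast_smul_eq_nsmul ℂ, smul_smul,
    inv_mul_cancel₀ cardL_ne_zero, one_smul]

lemma tau_e : tau (eAvg m) = eAvg m := by
  rw [eAvg, map_smul, map_sum]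
  congr 1
  refine Fintype.sum_equiv (Equiv.inv _)
    (fun σ => tau (MonoidAlgebra.single (iota m σ) (sgnC σ)))
    (fun σ => MonoidAlgebra.single (iota m σ) (sgnC σ)) (fun σ => ?_)
  show tau (MonoidAlgebra.single (iota m σ) (sgnC σ)) = MonoidAlgebra.single (iota m σ⁻¹) (sgnC σ⁻¹)
  rw [tau_single, ← map_inv, sgnC_inv]

lemma conj_inv_WH (g : WH m) :
    ∃ σ : Equiv.Perm (Fin m), iota m σ * g * iota m σ = g⁻¹ := by
  obtain ⟨σ, hσ⟩ := exists_conj_inv (g : Equiv.Perm (Fin m × ZMod 2)) g.2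
  exact ⟨σ, Subtype.ext (by simpa using hσ)⟩

lemma tau_ege (a : MonoidAlgebra ℂ (WH m)) :
    tau (eAvg m * a * eAvg m) = eAvg m * a * eAvg m := by
  induction a using MonoidAlgebra.induction_linear with
  | zero => simp
  | add f g hf hg => simp only [mul_add, add_mul, map_add, hf, hg]
  | single g r =>
    obtain ⟨σ, hσ⟩ := conj_inv_WH g
    rw [tau_mul, tau_mul, tau_e]
    show eAvg m * (tau (MonoidAlgebra.single g r) * eAvg m)
      = eAvg m * MonoidAlgebra.single g r * eAvg m
    rw [tau_single]
    have hg1 : MonoidAlgebra.single (g⁻¹ : WH m) r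
        = MonoidAlgebra.single (iota m σ) 1 *
          (MonoidAlgebra.single g r * MonoidAlgebra.single (iota m σ) 1) := by
      rw [MonoidAlgebra.single_mul_single, MonoidAlgebra.single_mul_single, ← hσ]
      rw [mul_one, one_mul, mul_assoc]
    rw [hg1]
    simp only [mul_assoc]
    rw [single_mul_e, mul_smul_comm, mul_smul_comm, mul_smul_comm,
      ← mul_assoc (eAvg m), e_mul_single, smul_mul_assoc, smul_smul,
      sgnC_mul_self, one_smul]

lemma comm_ege (a b : MonoidAlgebra ℂ (WH m)) :
    (eAvg m * a * eAvg m) * (eAvg m * b * eAvg m)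
      = (eAvg m * b * eAvg m) * (eAvg m * a * eAvg m) := by
  have h1 : ∀ x y : MonoidAlgebra ℂ (WH m),
      (eAvg m * x * eAvg m) * (eAvg m * y * eAvg m)
        = eAvg m * (x * (eAvg m * y)) * eAvg m := by
    intro x y
    simp only [mul_assoc]
    rw [← mul_assoc (eAvg m) (eAvg m), e_mul_e]
  have h2 : tau ((eAvg m * a * eAvg m) * (eAvg m * b * eAvg m))
      = (eAvg m * a * eAvg m) * (eAvg m * b * eAvg m) := by
    rw [h1]; exact tau_ege _
  rw [tau_mul, tau_ege, tau_ege] at h2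
  exact h2.symm

/-! ### Simple representations are cyclic -/

lemma invariant_eq_top {G : Type} [Monoid G] (V : FDRep ℂ G) (hV : Simple V)
    (N : Submodule ℂ V) (hinv : ∀ g : G, ∀ x ∈ N, V.ρ g x ∈ N) (hne : N ≠ ⊥) :
    N = ⊤ := by
  let ρN : Representation ℂ G N :=
    { toFun := fun g => (V.ρ g).restrict (hinv g)
      map_one' := by ext x; simp [LinearMap.restrict_apply]
      map_mul' := fun g h => by ext x; simp [LinearMap.restrict_apply] }
  let W : FDRep ℂ G := FDRep.of ρN
  let f : W ⟶ V :=
    { hom := FGModuleCat.ofHom N.subtype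
      comm := fun g => by
        ext x
        rfl }
  haveI hmono : Mono f := by
    constructor
    intro Z u v huv
    apply Action.hom_ext
    ext z
    have := congrArg Action.Hom.hom huv
    simp only [Action.comp_hom] at this
    have h2 := congrArg (fun (q : Z.V ⟶ V.V) => q z) this
    exact h2
  obtain ⟨n, hnN, hn0⟩ := Submodule.exists_mem_ne_zero_of_ne_bot hne
  have hf0 : f ≠ 0 := by
    intro h0
    have : f.hom (⟨n, hnN⟩ : N) = n := rfl
    rw [h0, Action.zero_hom] at this
    exact hn0 (this.symm.trans rfl)
  haveI : IsIso f := CategoryTheory.isIso_of_mono_of_nonzero hf0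
  have hsurj : ∀ w : V, w ∈ N := by
    intro w
    have hid : CategoryTheory.inv f ≫ f = 𝟙 V := IsIso.inv_hom_id f
    have hhom := congrArg Action.Hom.hom hid
    simp only [Action.comp_hom, Action.id_hom] at hhom
    have h2 := congrArg (fun (q : V.V ⟶ V.V) => q w) hhom
    simp only at h2
    have : f.hom ((CategoryTheory.inv f).hom w) = w := h2
    rw [← this]
    exact ((CategoryTheory.inv f).hom w).2
  exact Submodule.eq_top_iff'.mpr hsurj

lemma exists_algebra_elt {G : Type} [Monoid G] (V : FDRep ℂ G) (hV : Simple V)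
    {v : V} (hv : v ≠ 0) (w : V) :
    ∃ a : MonoidAlgebra ℂ G, Representation.asAlgebraHom V.ρ a v = w := by
  set N := Submodule.span ℂ (Set.range fun g : G => V.ρ g v) with hN
  have hinv : ∀ g : G, ∀ x ∈ N, V.ρ g x ∈ N := by
    intro g x hx
    induction hx using Submodule.span_induction with
    | mem x hxx =>
      obtain ⟨h, rfl⟩ := hxx
      refine Submodule.subset_span ⟨g * h, ?_⟩
      show V.ρ (g * h) v = V.ρ g (V.ρ h v)
      rw [map_mul]; rfl
    | zero => rw [map_zero]; exact N.zero_mem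
    | add x y hx hy ihx ihy => rw [map_add]; exact N.add_mem ihx ihy
    | smul a x hx ihx => rw [map_smul]; exact N.smul_mem a ihx
  have hvN : v ∈ N := by
    refine Submodule.subset_span ⟨1, ?_⟩
    show V.ρ 1 v = v
    rw [map_one]; rfl
  have hne : N ≠ ⊥ := by
    intro h
    rw [h, Submodule.mem_bot] at hvN
    exact hv hvN
  have htop := invariant_eq_top V hV N hinv hne
  have hw : w ∈ N := htop ▸ Submodule.mem_top
  induction hw using Submodule.span_induction with
  | mem x hxx =>
    obtain ⟨g, rfl⟩ := hxx
    exact ⟨MonoidAlgebra.single g 1, by rw [Representation.asAlgebraHom_single, one_smul]⟩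
  | zero => exact ⟨0, by rw [map_zero]; rfl⟩
  | add x y hx hy ihx ihy =>
    obtain ⟨a, ha⟩ := ihx; obtain ⟨b, hb⟩ := ihy
    exact ⟨a + b, by rw [map_add, LinearMap.add_apply, ha, hb]⟩
  | smul c x hx ihx =>
    obtain ⟨a, ha⟩ := ihx
    exact ⟨c • a, by rw [map_smul, LinearMap.smul_apply, ha]⟩

/-! ### The averaging projection and its rank -/

variable (V : FDRep ℂ (WH m))

/-- The action of the group algebra on `V`. -/
abbrev piV : MonoidAlgebra ℂ (WH m) →ₐ[ℂ] Module.End ℂ V :=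
  Representation.asAlgebraHom V.ρ

/-- The projection onto the `sgn`-isotypic subspace for `W_L`. -/
def PV : Module.End ℂ V := piV V (eAvg m)

lemma PV_idem : PV V * PV V = PV V := by
  rw [PV, ← map_mul, e_mul_e]

lemma PV_fix : ∀ w ∈ LinearMap.range (PV V), PV V w = w := by
  rintro w ⟨v, rfl⟩
  have := congrArg (fun (f : Module.End ℂ V) => f v) (PV_idem V)
  simpa using this

lemma PV_isProj : LinearMap.IsProj (LinearMap.range (PV V)) (PV V) :=
  ⟨fun x => LinearMap.mem_range_self _ x, fun x hx => PV_fix V x hx⟩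

lemma scalar_on_U (hV : Simple V) {u₀ : V} (hu₀ : u₀ ∈ LinearMap.range (PV V))
    (hu₀0 : u₀ ≠ 0) (x : MonoidAlgebra ℂ (WH m)) :
    ∃ c : ℂ, ∀ w ∈ LinearMap.range (PV V),
      piV V (eAvg m * x * eAvg m) w = c • w := by
  set U := LinearMap.range (PV V) with hU
  have hmaps : ∀ w ∈ U, piV V (eAvg m * x * eAvg m) w ∈ U := by
    intro w _
    have h1 : eAvg m * x * eAvg m = eAvg m * (x * eAvg m) := by rw [mul_assoc]
    rw [h1, map_mul]
    exact ⟨piV V (x * eAvg m) w, rfl⟩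
  set F : Module.End ℂ V := piV V (eAvg m * x * eAvg m) with hF
  set Frest : U →ₗ[ℂ] U := F.restrict hmaps with hFrest
  haveI : Nontrivial U := by
    refine nontrivial_of_ne ⟨u₀, hu₀⟩ 0 (fun hh => hu₀0 ?_)
    simpa using congrArg Subtype.val hh
  obtain ⟨c, hc⟩ := Module.End.exists_eigenvalue Frest
  obtain ⟨w₀, hw₀⟩ := hc.exists_hasEigenvector
  have hw₀0 : (w₀ : V) ≠ 0 := fun h => hw₀.right (Subtype.ext h)
  have hFw₀ : F (w₀ : V) = c • (w₀ : V) := by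
    have h1 := hw₀.apply_eq_smul
    have h2 := congrArg Subtype.val h1
    rw [LinearMap.restrict_coe_apply] at h2
    simpa using h2
  refine ⟨c, fun w hw => ?_⟩
  obtain ⟨b, hb⟩ := exists_algebra_elt V hV hw₀0 w
  set y := eAvg m * b * eAvg m with hy
  have hyw : piV V y (w₀ : V) = w := by
    rw [hy, map_mul, map_mul]
    simp only [Module.End.mul_apply]
    rw [show piV V (eAvg m) (w₀ : V) = (w₀ : V) from PV_fix V _ w₀.2, hb]
    exact PV_fix V w hw
  have hcomm : piV V ((eAvg m * x * eAvg m) * y)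
      = piV V (y * (eAvg m * x * eAvg m)) := by
    rw [hy, comm_ege]
  calc F w = F (piV V y (w₀ : V)) := by rw [hyw]
    _ = piV V ((eAvg m * x * eAvg m) * y) (w₀ : V) := by
        rw [map_mul (piV V) (eAvg m * x * eAvg m) y]; rfl
    _ = piV V y (F (w₀ : V)) := by
        rw [hcomm, map_mul (piV V) y (eAvg m * x * eAvg m)]; rfl
    _ = piV V y (c • (w₀ : V)) := by rw [hFw₀]
    _ = c • w := by rw [map_smul, hyw]

lemma rank_le_one (hV : Simple V) :
    Module.finrank ℂ (LinearMap.range (PV V)) ≤ 1 := by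
  set U := LinearMap.range (PV V) with hU
  rcases eq_or_ne U ⊥ with h | h
  · rw [h, finrank_bot]; omega
  · obtain ⟨u, huU, hu0⟩ := Submodule.exists_mem_ne_zero_of_ne_bot h
    have hle : U ≤ Submodule.span ℂ {u} := by
      intro v hvU
      obtain ⟨a, ha⟩ := exists_algebra_elt V hV hu0 v
      obtain ⟨c, hc⟩ := scalar_on_U V hV huU hu0 a
      have hv : piV V (eAvg m * a * eAvg m) u = v := by
        rw [show eAvg m * a * eAvg m = eAvg m * (a * eAvg m) from by rw [mul_assoc],
          map_mul]
        simp only [Module.End.mul_apply]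
        rw [map_mul]
        simp only [Module.End.mul_apply]
        rw [show piV V (eAvg m) u = u from PV_fix V u huU, ha]
        exact PV_fix V v hvU
      rw [← hv, hc u huU]
      exact Submodule.smul_mem _ c (Submodule.mem_span_singleton_self u)
    calc Module.finrank ℂ U ≤ Module.finrank ℂ (Submodule.span ℂ ({u} : Set V)) :=
          Submodule.finrank_mono hle
      _ = 1 := finrank_span_singleton hu0

lemma trace_PV : LinearMap.trace ℂ V (PV V)
    = (Nat.card (Equiv.Perm (Fin m)) : ℂ)⁻¹ *
        ∑ σ : Equiv.Perm (Fin m), sgnC σ * V.character (iota m σ) := by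
  rw [PV, eAvg, map_smul, map_smul, map_sum, map_sum, smul_eq_mul]
  congr 1
  refine Finset.sum_congr rfl fun σ _ => ?_
  rw [Representation.asAlgebraHom_single, map_smul, smul_eq_mul]
  rfl

lemma trace_PV_eq_finrank : LinearMap.trace ℂ V (PV V)
    = (Module.finrank ℂ (LinearMap.range (PV V)) : ℂ) :=
  (PV_isProj V).trace

/-! ### Reduction of the induced-character inner product -/

lemma sum_sgnExt (V : FDRep ℂ (WH m)) :
    ∑ h : WH m, sgnExt m ↑h * star (V.character h)
      = ∑ σ : Equiv.Perm (Fin m), sgnC σ * star (V.character (iota m σ)) := by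
  have h1 : ∀ h : WH m, sgnExt m ↑h * star (V.character h)
      = ∑ σ : Equiv.Perm (Fin m),
          if iota m σ = h then sgnC σ * star (V.character h) else 0 := by
    intro h
    rw [sgnExt, Finset.sum_mul]
    refine Finset.sum_congr rfl fun σ _ => ?_
    rw [ite_mul, zero_mul]
    refine if_congr ?_ rfl rfl
    constructor
    · intro hh; exact Subtype.ext (by rw [iota_coe]; exact hh)
    · intro hh; rw [← hh]; rfl
  rw [Finset.sum_congr rfl fun h _ => h1 h, Finset.sum_comm]
  refine Finset.sum_congr rfl fun σ _ => ?_
  rw [Finset.sum_ite_eq Finset.univ (iota m σ)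
    (fun h => sgnC σ * star (V.character h)), if_pos (Finset.mem_univ _)]

lemma conj_sum_sgnExt (V : FDRep ℂ (WH m)) (x : WH m) :
    ∑ h : WH m, sgnExt m (↑x⁻¹ * ↑h * ↑x) * star (V.character h)
      = ∑ h : WH m, sgnExt m ↑h * star (V.character h) := by
  refine Fintype.sum_equiv ((Equiv.mulLeft x⁻¹).trans (Equiv.mulRight x))
    (fun h => sgnExt m (↑x⁻¹ * ↑h * ↑x) * star (V.character h))
    (fun h => sgnExt m ↑h * star (V.character h)) (fun h => ?_)
  show sgnExt m (↑x⁻¹ * ↑h * ↑x) * star (V.character h)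
    = sgnExt m ↑(x⁻¹ * h * x) * star (V.character (x⁻¹ * h * x))
  have hchar : V.character (x⁻¹ * h * x) = V.character h := by
    have := FDRep.char_conj V h x⁻¹
    rwa [inv_inv] at this
  rw [hchar]
  rfl

lemma star_trace_sum (V : FDRep ℂ (WH m)) :
    (Nat.card (Equiv.Perm (Fin m)) : ℂ)⁻¹ *
        ∑ σ : Equiv.Perm (Fin m), sgnC σ * star (V.character (iota m σ))
      = star (LinearMap.trace ℂ V (PV V)) := by
  rw [trace_PV, star_mul', star_inv₀, star_natCast]
  congr 1
  rw [star_sum]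
  refine Finset.sum_congr rfl fun σ _ => ?_
  rw [star_mul', star_sgnC]

end HyperAux

/-- The character of the hyperoctahedral group `W_H` induced from the sign character of
the symmetric subgroup `W_L ≅ Sₘ` is multiplicity free: every irreducible character of
`W_H` occurs with multiplicity `0` or `1`. -/
theorem stmt_2 (m : ℕ) (V : FDRep ℂ (WH m)) (hV : Simple V) :
    (Nat.card (WH m) : ℂ)⁻¹ * (∑ h : WH m, indSgn m h * star (V.character h)) = 0 ∨
    (Nat.card (WH m) : ℂ)⁻¹ * (∑ h : WH m, indSgn m h * star (V.character h)) = 1 := by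
  classical
  have hE : (Nat.card (WH m) : ℂ)⁻¹ * (∑ h : WH m, indSgn m h * star (V.character h))
      = (Nat.card (Equiv.Perm (Fin m)) : ℂ)⁻¹ *
          ∑ σ : Equiv.Perm (Fin m),
            HyperAux.sgnC σ * star (V.character (HyperAux.iota m σ)) := by
    have h1 : ∀ h : WH m, indSgn m h * star (V.character h)
        = (Nat.card (Equiv.Perm (Fin m)) : ℂ)⁻¹ *
            ∑ x : WH m, sgnExt m (↑x⁻¹ * ↑h * ↑x) * star (V.character h) := by
      intro h; rw [indSgn, mul_assoc, Finset.sum_mul]; rfl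
    rw [Finset.sum_congr rfl fun h _ => h1 h, ← Finset.mul_sum, Finset.sum_comm]
    rw [Finset.sum_congr rfl fun x _ => HyperAux.conj_sum_sgnExt V x]
    rw [Finset.sum_const, Finset.card_univ, ← Nat.cast_smul_eq_nsmul ℂ, smul_eq_mul]
    rw [Nat.card_eq_fintype_card]
    have hne : (Fintype.card (WH m) : ℂ) ≠ 0 := Nat.cast_ne_zero.mpr Fintype.card_ne_zero
    rw [HyperAux.sum_sgnExt]
    set S := ∑ σ : Equiv.Perm (Fin m),
      HyperAux.sgnC σ * star (V.character (HyperAux.iota m σ)) with hS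
    calc (Fintype.card (WH m) : ℂ)⁻¹ *
          ((Nat.card (Equiv.Perm (Fin m)) : ℂ)⁻¹ * ((Fintype.card (WH m) : ℂ) * S))
        = ((Fintype.card (WH m) : ℂ)⁻¹ * (Fintype.card (WH m) : ℂ)) *
            ((Nat.card (Equiv.Perm (Fin m)) : ℂ)⁻¹ * S) := by ring
      _ = (Nat.card (Equiv.Perm (Fin m)) : ℂ)⁻¹ * S := by
          rw [inv_mul_cancel₀ hne, one_mul]
  rw [hE, HyperAux.star_trace_sum, HyperAux.trace_PV_eq_finrank, star_natCast]
  have hr := HyperAux.rank_le_one V hV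
  rcases Nat.le_one_iff_eq_zero_or_eq_one.mp hr with h | h
  · left; rw [h]; norm_num
  · right; rw [h]; norm_num

end
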